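/- Let k be a positive integer with 1 ≤ k ≤ n/2 and let C ⊆ F_2^n be a (k,k)-design such that no two points of C are antipodal (i.e., x ∈ C implies −x ∉ C). Then D = C ∪ (−C), where −C = {−x : x ∈ C}, is an antipodal (2k+1)-design in F_2^n. -/

import Mathlib

open Finset

/-- The Krawtchouk polynomials `Q_i^{(n)}(t)`, determined by `Q_0 = 1`, `Q_1 = t` and the
three-term recurrence `n·t·Q_i(t) = (n−i)·Q_{i+1}(t) + i·Q_{i−1}(t)`. -/
noncomputable def kraw (n : ℕ) : ℕ → ℝ → ℝ
  | 0, _ => 1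
  | 1, t => t
  | (i+2), t =>
      ((n : ℝ) * t * kraw n (i+1) t - ((i : ℝ) + 1) * kraw n i t) / ((n : ℝ) - ((i : ℝ) + 1))

/-- The "inner product" `⟨x,y⟩ = 1 − 2 d(x,y)/n`. -/
noncomputable def ip (n : ℕ) (x y : Fin n → ZMod 2) : ℝ :=
  1 - 2 * (hammingDist x y : ℝ) / (n : ℝ)

/-- The `i`-th moment `M_i(C) = ∑_{x,y ∈ C} Q_i^{(n)}(⟨x,y⟩)`. -/
noncomputable def moment (n : ℕ) (C : Finset (Fin n → ZMod 2)) (i : ℕ) : ℝ :=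
  ∑ x ∈ C, ∑ y ∈ C, kraw n i (ip n x y)

/-- The antipodal (complement) point `−x`. -/
def antip {n : ℕ} (x : Fin n → ZMod 2) : Fin n → ZMod 2 := fun j => x j + 1

/-- `C` is a `(k,k)`-design: a nonempty code with `M_i(C) = 0` for all even `i` with `2 ≤ i ≤ 2k`. -/
def IsKKDesign (n k : ℕ) (C : Finset (Fin n → ZMod 2)) : Prop :=
  C.Nonempty ∧ ∀ j : ℕ, 1 ≤ j → j ≤ k → moment n C (2 * j) = 0

/-- `C` is an `m`-design: a nonempty code with `M_i(C) = 0` for all `1 ≤ i ≤ m`. -/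
def IsMDesign (n m : ℕ) (C : Finset (Fin n → ZMod 2)) : Prop :=
  C.Nonempty ∧ ∀ i : ℕ, 1 ≤ i → i ≤ m → moment n C i = 0

/-- Generalized binomial coefficient `C(z,j)` for real `z`. -/
noncomputable def gchoose (z : ℝ) (j : ℕ) : ℝ :=
  (∏ i ∈ Finset.range j, (z - (i : ℝ))) / (Nat.factorial j : ℝ)

/-- The Krawtchouk polynomial `K_i^{(m)}(z)` in the variable `z`. -/
noncomputable def krawK (m i : ℕ) (z : ℝ) : ℝ :=
  ∑ j ∈ Finset.range (i + 1), (-1 : ℝ) ^ j * gchoose z j * gchoose ((m : ℝ) - z) (i - j)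

/-- The adjacent polynomial `Q_i^{1,1}(t) = K_i^{(n−2)}(n(1−t)/2 − 1) / ∑_{j=0}^i C(n−1,j)`. -/
noncomputable def Q11 (n i : ℕ) (t : ℝ) : ℝ :=
  krawK (n - 2) i ((n : ℝ) * (1 - t) / 2 - 1) /
    (∑ j ∈ Finset.range (i + 1), ((n - 1).choose j : ℝ))


lemma kraw_neg (n : ℕ) (i : ℕ) (t : ℝ) : kraw n i (-t) = (-1)^i * kraw n i t := by
  induction i using Nat.strong_induction_on generalizing t with
  | _ i ih =>
    match i with
    | 0 => simp [kraw]
    | 1 => simp [kraw]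
    | (i+2) =>
      rw [kraw, kraw, ih (i+1) (by omega), ih i (by omega)]
      rw [pow_succ, pow_succ]
      ring

lemma antip_antip {n : ℕ} (x : Fin n → ZMod 2) : antip (antip x) = x := by
  have h : ∀ a : ZMod 2, a + 1 + 1 = a := by decide
  funext j
  simp only [antip]
  exact h _

lemma hd_antip {n : ℕ} (x y : Fin n → ZMod 2) :
    hammingDist x (antip y) = n - hammingDist x y := by
  classical
  have h : ∀ a b : ZMod 2, (a ≠ b + 1) ↔ ¬ a ≠ b := by decide
  have heq : hammingDist x (antip y) = ({j | ¬ x j ≠ y j} : Finset (Fin n)).card := by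
    rw [hammingDist]
    congr 1
    ext j
    simp only [mem_filter, mem_univ, true_and, antip]
    exact (Finset.mem_filter.trans (and_iff_right (mem_univ j))).trans (h _ _)
  rw [heq, hammingDist, Finset.filter_not, card_sdiff_of_subset (filter_subset _ _), card_univ,
    Fintype.card_fin]

lemma hd_le {n : ℕ} (x y : Fin n → ZMod 2) : hammingDist x y ≤ n :=
  le_trans (hammingDist_le_card_fintype) (le_of_eq (Fintype.card_fin n))

lemma ip_antip {n : ℕ} (hn : 0 < n) (x y : Fin n → ZMod 2) :
    ip n x (antip y) = - ip n x y := by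
  have hd := hd_le x y
  rw [ip, ip, hd_antip, Nat.cast_sub hd]
  have hn' : (n : ℝ) ≠ 0 := Nat.cast_ne_zero.mpr hn.ne'
  field_simp
  ring

lemma ip_antip_left {n : ℕ} (hn : 0 < n) (x y : Fin n → ZMod 2) :
    ip n (antip x) y = - ip n x y := by
  unfold ip
  rw [hammingDist_comm (antip x) y, hammingDist_comm x y]
  exact ip_antip hn y x

lemma moment_union {n : ℕ} (hn : 0 < n) (C : Finset (Fin n → ZMod 2)) (i : ℕ)
    (hdisj : Disjoint C (C.image antip)) :
    moment n (C ∪ C.image antip) i = (2 + 2 * (-1 : ℝ)^i) * moment n C i := by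
  have hinj : ∀ x ∈ C, ∀ y ∈ C, antip x = antip y → x = y := fun x _ y _ h => by
    rw [← antip_antip x, h, antip_antip]
  have h1 : ∀ x y : Fin n → ZMod 2,
      kraw n i (ip n x (antip y)) = (-1 : ℝ)^i * kraw n i (ip n x y) := fun x y => by
    rw [ip_antip hn, kraw_neg]
  have h2 : ∀ x y : Fin n → ZMod 2,
      kraw n i (ip n (antip x) y) = (-1 : ℝ)^i * kraw n i (ip n x y) := fun x y => by
    rw [ip_antip_left hn, kraw_neg]
  have hsq : (-1 : ℝ)^i * (-1 : ℝ)^i = 1 := by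
    rw [← mul_pow]; norm_num
  unfold moment
  rw [Finset.sum_union hdisj, Finset.sum_image hinj]
  simp_rw [Finset.sum_union hdisj, Finset.sum_image hinj, h1, h2, ← mul_assoc, hsq, one_mul,
    ← Finset.mul_sum]
  rw [← Finset.sum_add_distrib, Finset.mul_sum]
  refine Finset.sum_congr rfl fun x _ => by ring

/-- doubling an antipodal-pair-free `(k,k)`-design yields an antipodal
`(2k+1)`-design. -/
theorem stmt_1 (n k : ℕ) (hn : 0 < n) (hk : 1 ≤ k) (hkn : 2 * k ≤ n)
    (C : Finset (Fin n → ZMod 2))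
    (hC : IsKKDesign n k C)
    (hnoanti : ∀ x ∈ C, antip x ∉ C) :
    (∀ x ∈ C ∪ C.image antip, antip x ∈ C ∪ C.image antip) ∧
      IsMDesign n (2 * k + 1) (C ∪ C.image antip) := by
  classical
  have hdisj : Disjoint C (C.image antip) := by
    rw [Finset.disjoint_left]
    intro a ha hb
    obtain ⟨x, hx, rfl⟩ := Finset.mem_image.mp hb
    exact hnoanti x hx ha
  constructor
  · intro x hx
    rcases Finset.mem_union.mp hx with h | h
    · exact Finset.mem_union_right _ (Finset.mem_image_of_mem _ h)
    · obtain ⟨y, hy, rfl⟩ := Finset.mem_image.mp h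
      rw [antip_antip]
      exact Finset.mem_union_left _ hy
  · constructor
    · obtain ⟨x, hx⟩ := hC.1
      exact ⟨x, Finset.mem_union_left _ hx⟩
    · intro i hi1 hi2
      rw [moment_union hn C i hdisj]
      rcases Nat.even_or_odd i with he | ho
      · obtain ⟨j, hj⟩ := he
        have hj1 : 1 ≤ j := by omega
        have hj2 : j ≤ k := by omega
        have : moment n C i = 0 := by
          have := hC.2 j hj1 hj2
          rwa [show 2 * j = i by omega] at this
        rw [this, mul_zero]
      · rw [ho.neg_one_pow]
        norm_num
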